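/- Let ε ∈ (0,1], M > 0, ρ ∈ [ε, M], N = ⌊ρ/ε⌋ ≥ 1 with (N+1)ε ≤ M, and η_ε(v) = k for v ∈ [(k-1)ε, kε). Let f : [0,M] → [0,1] be measurable with ∫₀^M f dv = ρ, and let f_min : [0,M] → [0,1] be a minimizer of ∫ η_ε g dv over {g : [0,M] → [0,1], ∫ g = ρ} of the form f_min = 𝟙_{[0,Nε]} + f̃, where f̃ is supported in [Nε,(N+1)ε], takes values in [0,1], has ∫ f̃ = ρ - Nε, and satisfies f_min(v) ≥ f(v) for v ∈ [Nε,(N+1)ε]. Then ∫₀^M |f - f_min| dv ≤ (3/ε) ∫₀^M η_ε (f - f_min) dv. -/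

import Mathlib

open MeasureTheory Set

theorem stmt_2 (ε M ρ : ℝ) (hε : 0 < ε) (hε1 : ε ≤ 1) (hM : 0 < M) (hρ : ρ ∈ Icc ε M)
    (N : ℕ) (hN : (N : ℤ) = ⌊ρ / ε⌋) (hN1 : 1 ≤ N) (hNM : ((N : ℝ) + 1) * ε ≤ M)
    (η : ℝ → ℝ) (hη : ∀ v, η v = (⌊v / ε⌋ : ℝ) + 1)
    (f : ℝ → ℝ) (hfmeas : Measurable f) (hf01 : ∀ v, f v ∈ Icc (0 : ℝ) 1)
    (hfmass : (∫ v in Icc (0 : ℝ) M, f v) = ρ)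
    (ftil : ℝ → ℝ) (hftilmeas : Measurable ftil)
    (hftil01 : ∀ v, ftil v ∈ Icc (0 : ℝ) 1)
    (hftilsupp : ∀ v, v ∉ Icc ((N : ℝ) * ε) (((N : ℝ) + 1) * ε) → ftil v = 0)
    (hftilmass : (∫ v in Icc (0 : ℝ) M, ftil v) = ρ - N * ε)
    (fmin : ℝ → ℝ)
    (hfmin : ∀ v, fmin v = (Icc (0 : ℝ) ((N : ℝ) * ε)).indicator (fun _ => (1 : ℝ)) v + ftil v)
    (hfmin01 : ∀ v, fmin v ∈ Icc (0 : ℝ) 1)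
    (hmin : ∀ g : ℝ → ℝ, Measurable g → (∀ v, g v ∈ Icc (0 : ℝ) 1) →
      (∫ v in Icc (0 : ℝ) M, g v) = ρ →
      (∫ v in Icc (0 : ℝ) M, η v * fmin v) ≤ ∫ v in Icc (0 : ℝ) M, η v * g v)
    (hdom : ∀ v ∈ Icc ((N : ℝ) * ε) (((N : ℝ) + 1) * ε), f v ≤ fmin v) :
    (∫ v in Icc (0 : ℝ) M, |f v - fmin v|)
      ≤ (3 / ε) * ∫ v in Icc (0 : ℝ) M, η v * (f v - fmin v) := by
  set b : ℝ := ((N : ℝ) + 1) * ε with hb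
  set nε : ℝ := (N : ℝ) * ε with hnε
  have hN1' : (1 : ℝ) ≤ (N : ℝ) := by exact_mod_cast hN1
  have hnε0 : 0 < nε := by positivity
  have hnεb : nε < b := by nlinarith
  have hb0 : 0 < b := by positivity
  have hbM : b ≤ M := hNM
  have hnεM : nε ≤ M := le_trans hnεb.le hbM
  -- measurability of fmin and η
  have hfmineq : fmin = fun v =>
      (Icc (0 : ℝ) nε).indicator (fun _ => (1 : ℝ)) v + ftil v := funext hfmin
  have hfminmeas : Measurable fmin := by
    rw [hfmineq]
    exact (measurable_const.indicator measurableSet_Icc).add hftilmeas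
  have hηmeas : Measurable η := by
    have hmono : Monotone η := by
      intro x y hxy
      rw [hη, hη]
      have : (⌊x / ε⌋ : ℤ) ≤ ⌊y / ε⌋ :=
        Int.floor_le_floor (by gcongr)
      have : ((⌊x / ε⌋ : ℤ) : ℝ) ≤ ((⌊y / ε⌋ : ℤ) : ℝ) := by exact_mod_cast this
      linarith
    exact hmono.measurable
  -- the difference g
  set g : ℝ → ℝ := fun v => f v - fmin v with hg
  have hgbound : ∀ v, |g v| ≤ 1 := by
    intro v
    have h1 := hf01 v
    have h2 := hfmin01 v
    simp only [mem_Icc] at h1 h2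
    have hgv : g v = f v - fmin v := rfl
    rw [abs_le]; constructor <;> [skip; skip] <;> rw [hgv] <;> [linarith; linarith]
  have hvol : volume (Icc (0 : ℝ) M) ≠ ⊤ := by simp [Real.volume_Icc]
  -- integrability
  have hgInt : IntegrableOn g (Icc (0 : ℝ) M) volume := by
    refine Measure.integrableOn_of_bounded hvol
      ((hfmeas.sub hfminmeas).aestronglyMeasurable) (M := 1) ?_
    exact ae_of_all _ fun v => by simpa using hgbound v
  have hηbound : ∀ v ∈ Icc (0 : ℝ) M, |η v| ≤ M / ε + 1 := by
    intro v hv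
    obtain ⟨hv0, hvM⟩ := hv
    have h1 : (0 : ℤ) ≤ ⌊v / ε⌋ := by
      apply Int.floor_nonneg.2; positivity
    have h2 : ((⌊v / ε⌋ : ℤ) : ℝ) ≤ v / ε := Int.floor_le _
    have h3 : v / ε ≤ M / ε := by gcongr
    have h4 : (0 : ℝ) ≤ ((⌊v / ε⌋ : ℤ) : ℝ) := by exact_mod_cast h1
    rw [hη, abs_of_nonneg (by linarith)]
    linarith
  have hηgInt : IntegrableOn (fun v => η v * g v) (Icc (0 : ℝ) M) volume := by
    refine Measure.integrableOn_of_bounded hvol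
      ((hηmeas.mul (hfmeas.sub hfminmeas)).aestronglyMeasurable) (M := M / ε + 1) ?_
    refine (ae_restrict_iff' measurableSet_Icc).2 (ae_of_all _ fun v hv => ?_)
    have h1 := hηbound v hv
    have h2 := hgbound v
    have h3 : (0:ℝ) ≤ |η v| := abs_nonneg _
    calc ‖η v * g v‖ = |η v| * |g v| := abs_mul _ _
      _ ≤ (M / ε + 1) * 1 := by
          apply mul_le_mul h1 h2 (abs_nonneg _) (by positivity)
      _ = M / ε + 1 := by ring
  -- splitting lemma
  have hsub1 : Ioc (0 : ℝ) b ⊆ Icc (0 : ℝ) M := fun x hx => ⟨hx.1.le, hx.2.trans hbM⟩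
  have hsub2 : Ioc b M ⊆ Icc (0 : ℝ) M := fun x hx => ⟨(hb0.trans hx.1).le, hx.2⟩
  have hdisj : Disjoint (Ioc (0 : ℝ) b) (Ioc b M) := by
    rw [Set.Ioc_disjoint_Ioc]
    exact inf_le_left.trans le_sup_right
  have hsplit : ∀ h : ℝ → ℝ, IntegrableOn h (Icc (0 : ℝ) M) volume →
      (∫ v in Icc (0 : ℝ) M, h v)
        = (∫ v in Ioc (0 : ℝ) b, h v) + ∫ v in Ioc b M, h v := by
    intro h hInt
    rw [integral_Icc_eq_integral_Ioc, ← Ioc_union_Ioc_eq_Ioc hb0.le hbM,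
      setIntegral_union hdisj measurableSet_Ioc (hInt.mono_set hsub1) (hInt.mono_set hsub2)]
  -- mass of fmin
  have hfminInt : IntegrableOn fmin (Icc (0 : ℝ) M) volume := by
    refine Measure.integrableOn_of_bounded hvol hfminmeas.aestronglyMeasurable (M := 1) ?_
    refine ae_of_all _ fun v => ?_
    have := hfmin01 v
    simp only [mem_Icc] at this
    rw [Real.norm_eq_abs, abs_of_nonneg this.1]; exact this.2
  have hfInt : IntegrableOn f (Icc (0 : ℝ) M) volume := by
    refine Measure.integrableOn_of_bounded hvol hfmeas.aestronglyMeasurable (M := 1) ?_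
    refine ae_of_all _ fun v => ?_
    have := hf01 v
    simp only [mem_Icc] at this
    rw [Real.norm_eq_abs, abs_of_nonneg this.1]; exact this.2
  have hftilInt : IntegrableOn ftil (Icc (0 : ℝ) M) volume := by
    refine Measure.integrableOn_of_bounded hvol hftilmeas.aestronglyMeasurable (M := 1) ?_
    refine ae_of_all _ fun v => ?_
    have := hftil01 v
    simp only [mem_Icc] at this
    rw [Real.norm_eq_abs, abs_of_nonneg this.1]; exact this.2
  have hindInt : IntegrableOn (fun v => (Icc (0 : ℝ) nε).indicator (fun _ => (1 : ℝ)) v)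
      (Icc (0 : ℝ) M) volume := by
    refine Measure.integrableOn_of_bounded hvol
      ((measurable_const.indicator measurableSet_Icc)).aestronglyMeasurable (M := 1) ?_
    refine ae_of_all _ fun v => ?_
    rw [Real.norm_eq_abs]
    by_cases hv : v ∈ Icc (0 : ℝ) nε <;> simp [indicator, hv]
  have hfminmass : (∫ v in Icc (0 : ℝ) M, fmin v) = ρ := by
    have : (∫ v in Icc (0 : ℝ) M, fmin v)
        = (∫ v in Icc (0 : ℝ) M, (Icc (0 : ℝ) nε).indicator (fun _ => (1 : ℝ)) v)
          + ∫ v in Icc (0 : ℝ) M, ftil v := by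
      rw [← integral_add hindInt hftilInt]
      exact setIntegral_congr_fun measurableSet_Icc fun v _ => hfmin v
    rw [this, hftilmass, setIntegral_indicator measurableSet_Icc,
      Set.inter_eq_self_of_subset_right (Icc_subset_Icc_right hnεM)]
    simp only [integral_const, Measure.restrict_apply, MeasurableSet.univ, univ_inter,
      Real.volume_Icc, sub_zero, smul_eq_mul, mul_one]
    simp only [Measure.real, Measure.restrict_apply MeasurableSet.univ, univ_inter,
      Real.volume_Icc, sub_zero, ENNReal.toReal_ofReal hnε0.le]
    ring
  have hgmass : (∫ v in Icc (0 : ℝ) M, g v) = 0 := by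
    simp only [hg]
    rw [integral_sub hfInt hfminInt, hfmass, hfminmass, sub_self]
  -- pointwise signs
  have hgle : ∀ v ∈ Icc (0 : ℝ) b, g v ≤ 0 := by
    intro v hv
    obtain ⟨hv0, hvb⟩ := hv
    rcases le_or_gt v nε with h | h
    · have hmem : v ∈ Icc (0 : ℝ) nε := ⟨hv0, h⟩
      have h1 := (hftil01 v).1
      have h2 := (hf01 v).2
      have : fmin v = 1 + ftil v := by
        rw [hfmin v, indicator_of_mem hmem]
      simp only [hg]; rw [this]; linarith
    · have := hdom v ⟨h.le, hvb⟩
      simp only [hg]; linarith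
  have hgeq : ∀ v ∈ Ioc b M, g v = f v := by
    intro v hv
    obtain ⟨hvb, hvM⟩ := hv
    have h1 : v ∉ Icc (0 : ℝ) nε := by
      intro hmem; exact absurd hmem.2 (by linarith)
    have h2 : ftil v = 0 := hftilsupp v (by intro hmem; exact absurd hmem.2 (by linarith))
    have : fmin v = 0 := by rw [hfmin v, indicator_of_notMem h1, h2, add_zero]
    simp only [hg]; rw [this, sub_zero]
  have hgge : ∀ v ∈ Ioc b M, 0 ≤ g v := by
    intro v hv
    rw [hgeq v hv]; exact (hf01 v).1
  -- the two pieces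
  set A : ℝ := ∫ v in Ioc (0 : ℝ) b, g v with hA
  set B : ℝ := ∫ v in Ioc b M, g v with hB
  have hAB : A + B = 0 := by
    rw [hA, hB, ← hsplit g hgInt, hgmass]
  have hB0 : 0 ≤ B := setIntegral_nonneg measurableSet_Ioc hgge
  -- LHS = -A + B
  have hgAbsInt : IntegrableOn (fun v => |g v|) (Icc (0 : ℝ) M) volume := hgInt.abs
  have hLHS : (∫ v in Icc (0 : ℝ) M, |f v - fmin v|) = -A + B := by
    have h1 : (∫ v in Ioc (0 : ℝ) b, |g v|) = -A := by
      rw [hA, ← integral_neg]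
      exact setIntegral_congr_fun measurableSet_Ioc fun v hv =>
        abs_of_nonpos (hgle v ⟨hv.1.le, hv.2⟩)
    have h2 : (∫ v in Ioc b M, |g v|) = B := by
      exact setIntegral_congr_fun measurableSet_Ioc fun v hv => abs_of_nonneg (hgge v hv)
    calc (∫ v in Icc (0 : ℝ) M, |f v - fmin v|)
        = ∫ v in Icc (0 : ℝ) M, |g v| := rfl
      _ = (∫ v in Ioc (0 : ℝ) b, |g v|) + ∫ v in Ioc b M, |g v| := hsplit _ hgAbsInt
      _ = -A + B := by rw [h1, h2]
  -- lower bound on the η-integral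
  have hT1 : ((N : ℝ) + 1) * A ≤ ∫ v in Ioc (0 : ℝ) b, η v * g v := by
    have heq : ((N : ℝ) + 1) * A = ∫ v in Ioo (0 : ℝ) b, ((N : ℝ) + 1) * g v := by
      rw [hA, integral_Ioc_eq_integral_Ioo, integral_const_mul]
    rw [heq, integral_Ioc_eq_integral_Ioo]
    have hc : IntegrableOn (fun v => ((N : ℝ) + 1) * g v) (Icc (0 : ℝ) M) volume :=
      hgInt.const_mul _
    refine setIntegral_mono_on
      (hc.mono_set (Ioo_subset_Icc_self.trans (Icc_subset_Icc_right hbM)))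
      ((hηgInt).mono_set (Ioo_subset_Icc_self.trans (Icc_subset_Icc_right hbM)))
      measurableSet_Ioo ?_
    intro v hv
    obtain ⟨hv0, hvb⟩ := hv
    have hfl : (⌊v / ε⌋ : ℤ) < (N : ℤ) + 1 := by
      rw [Int.floor_lt]
      push_cast
      rw [div_lt_iff₀ hε]
      linarith [hvb]
    have hηle : η v ≤ (N : ℝ) + 1 := by
      rw [hη]
      have : (⌊v / ε⌋ : ℤ) ≤ (N : ℤ) := by omega
      have : ((⌊v / ε⌋ : ℤ) : ℝ) ≤ (N : ℝ) := by exact_mod_cast this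
      linarith
    exact mul_le_mul_of_nonpos_right hηle (hgle v ⟨hv0.le, hvb.le⟩)
  have hT2 : ((N : ℝ) + 2) * B ≤ ∫ v in Ioc b M, η v * g v := by
    have heq : ((N : ℝ) + 2) * B = ∫ v in Ioc b M, ((N : ℝ) + 2) * g v := by
      rw [hB, integral_const_mul]
    rw [heq]
    have hc : IntegrableOn (fun v => ((N : ℝ) + 2) * g v) (Icc (0 : ℝ) M) volume :=
      hgInt.const_mul _
    refine setIntegral_mono_on
      (hc.mono_set hsub2)
      ((hηgInt).mono_set hsub2)
      measurableSet_Ioc ?_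
    intro v hv
    obtain ⟨hvb, hvM⟩ := hv
    have hfl : (N : ℤ) + 1 ≤ ⌊v / ε⌋ := by
      rw [Int.le_floor]
      push_cast
      rw [le_div_iff₀ hε]
      linarith [hvb]
    have hηge : (N : ℝ) + 2 ≤ η v := by
      rw [hη]
      have : ((N : ℤ) + 1 : ℝ) ≤ ((⌊v / ε⌋ : ℤ) : ℝ) := by exact_mod_cast hfl
      push_cast at this
      linarith
    exact mul_le_mul_of_nonneg_right hηge (hgge v ⟨hvb, hvM⟩)
  have hT : B ≤ ∫ v in Icc (0 : ℝ) M, η v * (f v - fmin v) := by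
    have : (∫ v in Icc (0 : ℝ) M, η v * (f v - fmin v))
        = (∫ v in Ioc (0 : ℝ) b, η v * g v) + ∫ v in Ioc b M, η v * g v :=
      hsplit _ hηgInt
    rw [this]
    nlinarith [hT1, hT2, hAB]
  -- conclude
  have hTnonneg : 0 ≤ ∫ v in Icc (0 : ℝ) M, η v * (f v - fmin v) := le_trans hB0 hT
  have h3ε : 2 ≤ 3 / ε := by
    rw [le_div_iff₀ hε]; linarith
  rw [hLHS]
  have hA' : -A = B := by linarith
  rw [hA']
  calc B + B = 2 * B := by ring
    _ ≤ 2 * (∫ v in Icc (0 : ℝ) M, η v * (f v - fmin v)) := by linarith [hT, hB0]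
    _ ≤ (3 / ε) * ∫ v in Icc (0 : ℝ) M, η v * (f v - fmin v) :=
        mul_le_mul_of_nonneg_right h3ε hTnonneg
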